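/- For every real number p with (1 + √(12/π − 3))/2 < p < 1, there exist positive real numbers a, b with a ≠ b such that C̄(p·a + (1−p)·b, p·b + (1−p)·a) > T(a,b); that is, the constant λ = (1 + √(12/π − 3))/2 in the lower bound C̄(λ·a + (1−λ)·b, λ·b + (1−λ)·a) < T(a,b) cannot be replaced by any larger value of the parameter in [1/2, 1]. -/

import Mathlib

open Real

/-- The Seiffert mean of two positive reals. -/
noncomputable def seiffertT (a b : ℝ) : ℝ := (a - b) / (2 * Real.arctan ((a - b) / (a + b)))

/-- The centroidal mean of two positive reals. -/
noncomputable def centroidalMean (a b : ℝ) : ℝ := 2 * (a ^ 2 + a * b + b ^ 2) / (3 * (a + b))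

theorem stmt_2 (p : ℝ) (hp₁ : (1 + Real.sqrt (12 / π - 3)) / 2 < p) (hp₂ : p < 1) :
    ∃ a b : ℝ, 0 < a ∧ 0 < b ∧ a ≠ b ∧
      centroidalMean (p * a + (1 - p) * b) (p * b + (1 - p) * a) > seiffertT a b := by
  have hπ : 0 < π := pi_pos
  have hs : 0 ≤ 12 / π - 3 := by
    rw [sub_nonneg, le_div_iff₀ hπ]
    nlinarith [pi_lt_d2]
  have hkey : 3 / π < p ^ 2 - p + 1 := by
    have h1 : Real.sqrt (12 / π - 3) < 2 * p - 1 := by linarith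
    have h2 : 12 / π - 3 < (2 * p - 1) ^ 2 := by
      nlinarith [Real.sq_sqrt hs, Real.sqrt_nonneg (12 / π - 3)]
    have h12 : (12 : ℝ) / π = 4 * (3 / π) := by ring
    nlinarith [h2, h12]
  set f : ℝ → ℝ := fun b =>
    centroidalMean (p * 1 + (1 - p) * b) (p * b + (1 - p) * 1) - seiffertT 1 b with hf
  have hc : ContinuousAt f 0 := by
    simp only [hf]
    unfold centroidalMean seiffertT
    apply ContinuousAt.sub
    · apply ContinuousAt.div
      · fun_prop
      · fun_prop
      · norm_num
    · apply ContinuousAt.div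
      · fun_prop
      · apply continuousAt_const.mul
        apply Real.continuous_arctan.continuousAt.comp
        apply ContinuousAt.div
        · fun_prop
        · fun_prop
        · norm_num
      · simp [Real.arctan_one]
  have hf0 : 0 < f 0 := by
    have hcm : f 0 = 2 * (p ^ 2 - p + 1) / 3 - 2 / π := by
      simp only [hf, centroidalMean, seiffertT, mul_zero, mul_one, add_zero, zero_add]
      norm_num [Real.arctan_one]
      ring
    rw [hcm, sub_pos, div_lt_div_iff₀ hπ (by norm_num : (0:ℝ) < 3)]
    nlinarith [hkey, (div_lt_iff₀ hπ).mp hkey]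
  have h2 : ∀ᶠ b in nhdsWithin (0:ℝ) (Set.Ioi 0), 0 < f b :=
    (hc.eventually (eventually_gt_nhds hf0)).filter_mono nhdsWithin_le_nhds
  have h3 : ∀ᶠ b in nhdsWithin (0:ℝ) (Set.Ioi 0), b < 1 :=
    (eventually_lt_nhds one_pos).filter_mono nhdsWithin_le_nhds
  have h1 : ∀ᶠ b in nhdsWithin (0:ℝ) (Set.Ioi 0), 0 < b := eventually_mem_nhdsWithin
  obtain ⟨b, hb0, hb1, hbf⟩ := (h1.and (h3.and h2)).exists
  exact ⟨1, b, one_pos, hb0, by intro h; exact absurd h.symm (ne_of_lt hb1),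
    by simpa [hf, gt_iff_lt, sub_pos] using hbf⟩
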